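/- Let X, Y, Z be Banach spaces and F ∈ B(X,Y), G ∈ B(Y,Z) regular operators (admitting generalized inverses) such that GF is also regular. Then the sequence 0 → ker F → ker GF → ker G → X_F → X_{GF} → X_G → 0 is exact, where X_F, X_{GF}, X_G denote (chosen closed) complements of Im F in Y, Im GF in Z, and Im G in Z respectively, with the natural connecting maps. -/

import Mathlib

/-- If `F ∈ B(X,Y)`, `G ∈ B(Y,Z)` and `GF` are regular, then the sequence
`0 → ker F → ker GF → ker G → X_F → X_{GF} → X_G → 0` is exact, where `X_F`, `X_{GF}`, `X_G`
are chosen closed complements of the ranges of `F`, `GF`, `G` and the maps are the natural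
inclusion, restriction of `F`, projections along the ranges, and the map induced by `G`. -/
theorem regular_six_term_exact_sequence
    {X Y Z : Type*} [NormedAddCommGroup X] [NormedSpace ℝ X] [CompleteSpace X]
    [NormedAddCommGroup Y] [NormedSpace ℝ Y] [CompleteSpace Y]
    [NormedAddCommGroup Z] [NormedSpace ℝ Z] [CompleteSpace Z]
    (F : X →L[ℝ] Y) (G : Y →L[ℝ] Z)
    (hF : ∃ U : Y →L[ℝ] X, ∀ x, F (U (F x)) = F x)
    (hG : ∃ V : Z →L[ℝ] Y, ∀ y, G (V (G y)) = G y)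
    (hGF : ∃ W : Z →L[ℝ] X, ∀ x, G (F (W (G (F x)))) = G (F x))
    (YF : Submodule ℝ Y) (hYFc : IsClosed (YF : Set Y))
    (hYF : IsCompl YF (LinearMap.range (F : X →ₗ[ℝ] Y)))
    (ZGF : Submodule ℝ Z) (hZGFc : IsClosed (ZGF : Set Z))
    (hZGF : IsCompl ZGF (LinearMap.range ((G.comp F : X →L[ℝ] Z) : X →ₗ[ℝ] Z)))
    (ZG : Submodule ℝ Z) (hZGc : IsClosed (ZG : Set Z))
    (hZG : IsCompl ZG (LinearMap.range (G : Y →ₗ[ℝ] Z))) :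
    -- exactness at `ker GF`: the image of `ker F` is the kernel of `F` restricted to `ker GF`
    (∀ x ∈ LinearMap.ker ((G.comp F : X →L[ℝ] Z) : X →ₗ[ℝ] Z), (F x = 0 ↔ x ∈ LinearMap.ker (F : X →ₗ[ℝ] Y))) ∧
    -- exactness at `ker G`: the image of `F|_{ker GF}` is the kernel of the projection onto
    -- `YF` along `range F`, restricted to `ker G`
    (∀ y ∈ LinearMap.ker (G : Y →ₗ[ℝ] Z),
      (Submodule.linearProjOfIsCompl YF (LinearMap.range (F : X →ₗ[ℝ] Y)) hYF y = 0 ↔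
        ∃ x ∈ LinearMap.ker ((G.comp F : X →L[ℝ] Z) : X →ₗ[ℝ] Z), F x = y)) ∧
    -- exactness at `YF`: the kernel of the map induced by `G` is the image of `ker G`
    (∀ y : YF,
      (Submodule.linearProjOfIsCompl ZGF (LinearMap.range ((G.comp F : X →L[ℝ] Z) : X →ₗ[ℝ] Z)) hZGF (G y) = 0 ↔
        ∃ v ∈ LinearMap.ker (G : Y →ₗ[ℝ] Z),
          Submodule.linearProjOfIsCompl YF (LinearMap.range (F : X →ₗ[ℝ] Y)) hYF v = y)) ∧
    -- exactness at `ZGF`: the kernel of the projection to `ZG` is the image of `YF`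
    (∀ z : ZGF,
      (Submodule.linearProjOfIsCompl ZG (LinearMap.range (G : Y →ₗ[ℝ] Z)) hZG (z : Z) = 0 ↔
        ∃ y : YF,
          Submodule.linearProjOfIsCompl ZGF (LinearMap.range ((G.comp F : X →L[ℝ] Z) : X →ₗ[ℝ] Z)) hZGF (G y) = z)) ∧
    -- exactness at `ZG`: the projection `ZGF → ZG` is surjective
    (∀ w : ZG, ∃ z : ZGF,
      Submodule.linearProjOfIsCompl ZG (LinearMap.range (G : Y →ₗ[ℝ] Z)) hZG (z : Z) = w) := by
  unfold Submodule.linearProjOfIsCompl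
  have hrGF : ∀ x : X, G (F x) ∈ LinearMap.range ((G.comp F : X →L[ℝ] Z) : X →ₗ[ℝ] Z) := fun x => ⟨x, rfl⟩
  refine ⟨?_, ?_, ?_, ?_, ?_⟩
  · intro x _
    exact (LinearMap.mem_ker).symm
  · intro y hy
    constructor
    · intro h
      obtain ⟨x, hx⟩ := (Submodule.projectionOnto_apply_eq_zero_iff hYF).1 h
      refine ⟨x, ?_, hx⟩
      simp only [LinearMap.mem_ker, ContinuousLinearMap.coe_comp', Function.comp_apply]
      show G (F x) = 0
      rw [show F x = y from hx]
      exact hy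
    · rintro ⟨x, _, rfl⟩
      exact (Submodule.projectionOnto_apply_eq_zero_iff hYF).2 ⟨x, rfl⟩
  · intro y
    constructor
    · intro h
      obtain ⟨x, hx⟩ := (Submodule.projectionOnto_apply_eq_zero_iff hZGF).1 h
      have hx' : G (F x) = G (y : Y) := hx
      refine ⟨(y : Y) - F x, ?_, ?_⟩
      · simp [LinearMap.mem_ker, map_sub, hx']
      · rw [map_sub, Submodule.projectionOnto_apply_left hYF y,
          Submodule.projectionOnto_apply_of_mem_right hYF (x := F x) ⟨x, rfl⟩, sub_zero]
    · rintro ⟨v, hv, hpv⟩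
      have hsub : v - (y : Y) ∈ LinearMap.range (F : X →ₗ[ℝ] Y) := by
        rw [← Submodule.projectionOnto_apply_eq_zero_iff hYF, map_sub, hpv,
          Submodule.projectionOnto_apply_left hYF y, sub_self]
      obtain ⟨x, hx⟩ := hsub
      apply (Submodule.projectionOnto_apply_eq_zero_iff hZGF).2
      refine ⟨-x, ?_⟩
      show G (F (-x)) = G (y : Y)
      have hFx : F x = v - (y : Y) := hx
      rw [map_neg, hFx, map_neg, map_sub, (show G v = 0 from hv), zero_sub, neg_neg]
  · intro z
    constructor
    · intro h
      obtain ⟨u, hu⟩ := (Submodule.projectionOnto_apply_eq_zero_iff hZG).1 h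
      have hu' : G u = (z : Z) := hu
      refine ⟨Submodule.projectionOnto YF (LinearMap.range (F : X →ₗ[ℝ] Y)) hYF u, ?_⟩
      set y := Submodule.projectionOnto YF (LinearMap.range (F : X →ₗ[ℝ] Y)) hYF u with hy
      have hsub : u - (y : Y) ∈ LinearMap.range (F : X →ₗ[ℝ] Y) := by
        rw [← Submodule.projectionOnto_apply_eq_zero_iff hYF, map_sub, ← hy,
          Submodule.projectionOnto_apply_left hYF, sub_self]
      obtain ⟨x, hx⟩ := hsub
      have hFx : F x = u - (y : Y) := hx
      have hGy : G (y : Y) = (z : Z) - G (F x) := by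
        rw [hFx, map_sub, hu']; abel
      rw [hGy, map_sub, Submodule.projectionOnto_apply_of_mem_right hZGF (hrGF x), sub_zero,
        Submodule.projectionOnto_apply_left hZGF z]
    · rintro ⟨y, hy⟩
      have hsub : G (y : Y) - (z : Z) ∈ LinearMap.range ((G.comp F : X →L[ℝ] Z) : X →ₗ[ℝ] Z) := by
        rw [← Submodule.projectionOnto_apply_eq_zero_iff hZGF, map_sub, hy,
          Submodule.projectionOnto_apply_left hZGF z, sub_self]
      obtain ⟨x, hx⟩ := hsub
      have hx' : G (F x) = G (y : Y) - (z : Z) := hx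
      apply (Submodule.projectionOnto_apply_eq_zero_iff hZG).2
      refine ⟨(y : Y) - F x, ?_⟩
      show G ((y : Y) - F x) = (z : Z)
      rw [map_sub, hx']; abel
  · intro w
    refine ⟨Submodule.projectionOnto ZGF (LinearMap.range ((G.comp F : X →L[ℝ] Z) : X →ₗ[ℝ] Z)) hZGF (w : Z), ?_⟩
    set z := Submodule.projectionOnto ZGF (LinearMap.range ((G.comp F : X →L[ℝ] Z) : X →ₗ[ℝ] Z)) hZGF (w : Z) with hz
    have hsub : (w : Z) - (z : Z) ∈ LinearMap.range ((G.comp F : X →L[ℝ] Z) : X →ₗ[ℝ] Z) := by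
      rw [← Submodule.projectionOnto_apply_eq_zero_iff hZGF, map_sub, ← hz,
        Submodule.projectionOnto_apply_left hZGF, sub_self]
    obtain ⟨x, hx⟩ := hsub
    have hx' : G (F x) = (w : Z) - (z : Z) := hx
    have : (z : Z) = (w : Z) - G (F x) := by rw [hx']; abel
    rw [this, map_sub, Submodule.projectionOnto_apply_of_mem_right hZG (x := G (F x)) ⟨F x, rfl⟩, sub_zero,
      Submodule.projectionOnto_apply_left hZG w]
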